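/- Let rc, cw, cc, e₀ be real numbers with cc > 0, cc ≤ rc + cw and e₀ ≥ 0, and set L = rc + cw + cc + e₀. Define d : [0, L] → ℝ by d(t) = 0 for 0 ≤ t ≤ rc + cw − cc, d(t) = t − (rc + cw − cc) for rc + cw − cc ≤ t ≤ rc + cw, d(t) = cc for rc + cw ≤ t ≤ rc + cw + e₀, and d(t) = 0 for rc + cw + e₀ ≤ t ≤ L. Then ∫₀^L d(t) dt = cc²/2 + e₀·cc, so that (1/L)·∫₀^L d(t) dt = (cc²/2 + e₀·cc)/(rc + cw + cc + e₀). -/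

import Mathlib

/-- Integral of the delay cost function over an expanded retry. -/
theorem expansion_cost_integral
    (rc cw cc e₀ : ℝ) (hcc : 0 < cc) (hle : cc ≤ rc + cw) (he₀ : 0 ≤ e₀)
    (L : ℝ) (hL : L = rc + cw + cc + e₀)
    (d : ℝ → ℝ)
    (hd : ∀ t : ℝ,
      d t = if t ≤ rc + cw - cc then 0
            else if t ≤ rc + cw then t - (rc + cw - cc)
            else if t ≤ rc + cw + e₀ then cc
            else 0) :
    (∫ t in (0 : ℝ)..L, d t) = cc ^ 2 / 2 + e₀ * cc ∧
    (1 / L) * ∫ t in (0 : ℝ)..L, d t =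
      (cc ^ 2 / 2 + e₀ * cc) / (rc + cw + cc + e₀) := by
  set a := rc + cw - cc with ha
  set b := rc + cw with hb
  set c := rc + cw + e₀ with hc
  have h0a : (0:ℝ) ≤ a := by simp [ha]; linarith
  have hab : a ≤ b := by simp [ha, hb]; linarith
  have hbc : b ≤ c := by simp [hb, hc]; linarith
  have hcL : c ≤ L := by rw [hL]; simp [hc]; linarith
  -- equality of d with simple functions on each open-closed interval
  have e1 : Set.EqOn d (fun _ => (0:ℝ)) (Set.Ioc (0:ℝ) a) := by
    intro t ht; simp only [Set.mem_Ioc] at ht; simp [hd t, ht.2]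
  have e2 : Set.EqOn d (fun t => t - a) (Set.Ioc a b) := by
    intro t ht; simp only [Set.mem_Ioc] at ht
    rw [hd t, if_neg (not_le.mpr ht.1), if_pos ht.2]
  have e3 : Set.EqOn d (fun _ => cc) (Set.Ioc b c) := by
    intro t ht; simp only [Set.mem_Ioc] at ht
    have h1 : ¬ t ≤ a := by simp only [ha, hb] at *; push_neg; linarith
    have h2 : ¬ t ≤ b := not_le.mpr ht.1
    simp [hd t, h1, h2, ht.2]
  have e4 : Set.EqOn d (fun _ => (0:ℝ)) (Set.Ioc c L) := by
    intro t ht; simp only [Set.mem_Ioc] at ht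
    have h1 : ¬ t ≤ a := by simp only [ha, hc] at *; push_neg; linarith
    have h2 : ¬ t ≤ b := by simp only [hb, hc] at *; push_neg; linarith
    have h3 : ¬ t ≤ c := not_le.mpr ht.1
    simp [hd t, h1, h2, h3]
  -- integrability on each piece
  have key : ∀ (p q : ℝ) (g : ℝ → ℝ), p ≤ q → Continuous g →
      Set.EqOn d g (Set.Ioc p q) →
      IntervalIntegrable d MeasureTheory.volume p q ∧
      (∫ t in p..q, d t) = ∫ t in p..q, g t := by
    intro p q g hpq hg heq
    have hae : ∀ᵐ t ∂MeasureTheory.volume, t ∈ Set.Ioc p q → d t = g t :=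
      Filter.Eventually.of_forall fun t ht => heq ht
    have haer : ∀ᵐ t ∂(MeasureTheory.volume.restrict (Set.Ioc p q)), d t = g t :=
      (MeasureTheory.ae_restrict_iff' measurableSet_Ioc).2 hae
    have hgI : IntervalIntegrable g MeasureTheory.volume p q :=
      hg.intervalIntegrable p q
    constructor
    · rw [intervalIntegrable_iff, Set.uIoc_of_le hpq]
      have hg2 := intervalIntegrable_iff.1 hgI
      rw [Set.uIoc_of_le hpq] at hg2
      exact hg2.congr (Filter.EventuallyEq.symm haer)
    · apply intervalIntegral.integral_congr_ae
      rw [Set.uIoc_of_le hpq]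
      exact hae
  obtain ⟨i1, v1⟩ := key 0 a _ h0a continuous_const e1
  obtain ⟨i2, v2⟩ := key a b _ hab (by continuity) e2
  obtain ⟨i3, v3⟩ := key b c _ hbc continuous_const e3
  obtain ⟨i4, v4⟩ := key c L _ hcL continuous_const e4
  have s1 := intervalIntegral.integral_add_adjacent_intervals i1 i2
  have s2 := intervalIntegral.integral_add_adjacent_intervals i3 i4
  have s3 := intervalIntegral.integral_add_adjacent_intervals (i1.trans i2) (i3.trans i4)
  have h2 : (∫ t in a..b, (t - a)) = cc ^ 2 / 2 := by
    rw [intervalIntegral.integral_comp_sub_right (fun t => t) a, integral_id]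
    have haa : a = b - cc := by simp [ha, hb]
    rw [haa]; ring
  have main : (∫ t in (0:ℝ)..L, d t) = cc ^ 2 / 2 + e₀ * cc := by
    have : (∫ t in (0:ℝ)..L, d t) = (∫ t in (0:ℝ)..a, d t) + (∫ t in a..b, d t)
        + (∫ t in b..c, d t) + (∫ t in c..L, d t) := by linarith
    rw [this, v1, v2, v3, v4, h2]
    simp only [intervalIntegral.integral_zero, intervalIntegral.integral_const,
      smul_eq_mul, hc, hb]
    ring
  refine ⟨main, ?_⟩
  rw [main, hL]
  ring
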